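/- Let b_1, …, b_n be independent Bernoulli random variables with parameters p_1, …, p_n ∈ (0,1), let S_n = b_1 + ⋯ + b_n, let p̄ = (p_1 + ⋯ + p_n)/n, and let S*_n ∼ B(n, p̄). Then for every convex function Φ : ℝ → ℝ, E Φ(S_n) ≤ E Φ(S*_n). -/

import Mathlib

open Finset MeasureTheory ProbabilityTheory
open scoped ENNReal NNReal

namespace HoeffdingAux

/-- PMF weights for the sum of independent Bernoulli variables with the given parameters. -/
def wt : List ℝ → ℕ → ℝ
  | [], 0 => 1
  | [], _+1 => 0
  | q :: l, 0 => (1 - q) * wt l 0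
  | q :: l, k+1 => (1 - q) * wt l (k+1) + q * wt l k

/-- Expectation of `g` of a sum of independent Bernoullis. -/
noncomputable def bexp : List ℝ → (ℝ → ℝ) → ℝ
  | [], g => g 0
  | q :: l, g => (1 - q) * bexp l g + q * bexp l (fun x => g (x+1))

lemma wt_nonneg {l : List ℝ} (hl : ∀ x ∈ l, 0 ≤ x ∧ x ≤ 1) : ∀ k, 0 ≤ wt l k := by
  induction l with
  | nil => intro k; cases k <;> simp [wt]
  | cons q l ih =>
    have hq := hl q (List.mem_cons_self)
    have hl' : ∀ x ∈ l, 0 ≤ x ∧ x ≤ 1 := fun x hx => hl x (List.mem_cons_of_mem _ hx)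
    intro k
    cases k with
    | zero => exact mul_nonneg (by linarith [hq.2]) (ih hl' 0)
    | succ k =>
      rw [wt]
      exact add_nonneg (mul_nonneg (by linarith [hq.2]) (ih hl' (k+1)))
        (mul_nonneg hq.1 (ih hl' k))

lemma wt_eq_zero {l : List ℝ} : ∀ {k}, l.length < k → wt l k = 0 := by
  induction l with
  | nil => intro k hk; cases k with
    | zero => omega
    | succ k => simp [wt]
  | cons q l ih =>
    intro k hk
    cases k with
    | zero => simp at hk
    | succ k =>
      simp only [List.length_cons] at hk
      rw [wt, ih (by omega), ih (by omega)]
      ring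

lemma bexp_eq_sum (l : List ℝ) (g : ℝ → ℝ) :
    bexp l g = ∑ k ∈ range (l.length + 1), wt l k * g k := by
  induction l generalizing g with
  | nil => simp [bexp, wt]
  | cons q l ih =>
    rw [bexp, ih g, ih (fun x => g (x+1))]
    beta_reduce
    have hz : wt l (l.length + 1) = 0 := wt_eq_zero (by omega)
    have e0 : ∑ k ∈ range (l.length + 1 + 1), wt l k * g ↑k
        = ∑ k ∈ range (l.length + 1), wt l k * g ↑k := by
      rw [Finset.sum_range_succ, hz]; ring
    have e1 : (q :: l).length + 1 = l.length + 1 + 1 := by simp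
    rw [e1, Finset.sum_range_succ' (fun k => wt (q :: l) k * g ↑k) (l.length + 1)]
    have e2 : ∀ k ∈ range (l.length+1), wt (q :: l) (k+1) * g ↑(k+1)
        = (1-q) * (wt l (k+1) * g ↑(k+1)) + q * (wt l k * g (↑k + 1)) := by
      intro k _; rw [wt]; push_cast; ring
    rw [Finset.sum_congr rfl e2, Finset.sum_add_distrib, ← Finset.mul_sum, ← Finset.mul_sum]
    have e3 : ∑ k ∈ range (l.length+1), wt l (k+1) * g ↑(k+1)
        = ∑ k ∈ range (l.length + 1), wt l k * g ↑k - wt l 0 * g ↑(0:ℕ) := by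
      have h := Finset.sum_range_succ' (fun k => wt l k * g ↑k) (l.length + 1)
      rw [e0] at h
      beta_reduce at h
      linarith [h]
    rw [e3]
    have e4 : wt (q :: l) 0 = (1-q) * wt l 0 := rfl
    rw [e4]
    push_cast
    ring

lemma bexp_add (l : List ℝ) (g h : ℝ → ℝ) :
    bexp l (fun x => g x + h x) = bexp l g + bexp l h := by
  induction l generalizing g h with
  | nil => simp [bexp]
  | cons q l ih => simp only [bexp]; rw [ih, ih]; ring

lemma bexp_smul (l : List ℝ) (c : ℝ) (g : ℝ → ℝ) :
    bexp l (fun x => c * g x) = c * bexp l g := by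
  induction l generalizing g with
  | nil => simp [bexp]
  | cons q l ih => simp only [bexp]; rw [ih, ih]; ring

lemma bexp_nonneg {l : List ℝ} (hl : ∀ x ∈ l, 0 ≤ x ∧ x ≤ 1) {g : ℝ → ℝ}
    (hg : ∀ x, 0 ≤ g x) : 0 ≤ bexp l g := by
  induction l generalizing g with
  | nil => exact hg 0
  | cons q l ih =>
    have hq := hl q (List.mem_cons_self)
    have hl' : ∀ x ∈ l, 0 ≤ x ∧ x ≤ 1 := fun x hx => hl x (List.mem_cons_of_mem _ hx)
    exact add_nonneg (mul_nonneg (by linarith [hq.2]) (ih hl' hg))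
      (mul_nonneg hq.1 (ih hl' (fun x => hg (x+1))))

lemma bexp_pair (a b : ℝ) (l : List ℝ) (g : ℝ → ℝ) :
    bexp (a :: b :: l) g
      = bexp l g + (a + b) * (bexp l (fun x => g (x+1)) - bexp l g)
        + (a * b) * (bexp l (fun x => g (x+2)) - 2 * bexp l (fun x => g (x+1)) + bexp l g) := by
  have h2 : bexp l (fun x => g (x+1+1)) = bexp l (fun x => g (x+2)) := by
    congr 1; funext x; ring_nf
  simp only [bexp]
  rw [h2]; ring

lemma bexp_perm {l l' : List ℝ} (h : l.Perm l') (g : ℝ → ℝ) : bexp l g = bexp l' g := by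
  induction h generalizing g with
  | nil => rfl
  | cons x _ ih => simp only [bexp]; rw [ih, ih]
  | swap x y l => rw [bexp_pair, bexp_pair]; ring
  | trans _ _ ih1 ih2 => rw [ih1, ih2]

lemma shift_convex {Φ : ℝ → ℝ} (hΦ : ConvexOn ℝ Set.univ Φ) :
    ConvexOn ℝ Set.univ (fun x => Φ (x + 1)) := by
  refine ⟨convex_univ, fun x _ y _ c d hc hd hcd => ?_⟩
  have := hΦ.2 (Set.mem_univ (x+1)) (Set.mem_univ (y+1)) hc hd hcd
  simp only [smul_eq_mul] at this ⊢
  have hx : c * (x + 1) + d * (y + 1) = c * x + d * y + 1 := by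
    have : c * 1 + d * 1 = 1 := by rw [mul_one, mul_one]; exact hcd
    ring_nf; linarith [this]
  rw [hx] at this
  exact this

lemma bexp_two_le {a b a' b' : ℝ} {l : List ℝ} (hl : ∀ x ∈ l, 0 ≤ x ∧ x ≤ 1)
    (hsum : a + b = a' + b') (hprod : a * b ≤ a' * b') {Φ : ℝ → ℝ}
    (hΦ : ConvexOn ℝ Set.univ Φ) :
    bexp (a :: b :: l) Φ ≤ bexp (a' :: b' :: l) Φ := by
  rw [bexp_pair, bexp_pair, hsum]
  have hD : 0 ≤ bexp l (fun x => Φ (x+2)) - 2 * bexp l (fun x => Φ (x+1)) + bexp l Φ := by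
    have key : bexp l (fun x => Φ (x+2) + ((-2) * Φ (x+1) + Φ x))
        = bexp l (fun x => Φ (x+2)) + ((-2) * bexp l (fun x => Φ (x+1)) + bexp l Φ) := by
      rw [bexp_add, bexp_add, bexp_smul]
    have hpt : ∀ x : ℝ, 0 ≤ Φ (x+2) + ((-2) * Φ (x+1) + Φ x) := by
      intro x
      have := hΦ.2 (Set.mem_univ x) (Set.mem_univ (x+2)) (by norm_num : (0:ℝ) ≤ 1/2)
        (by norm_num : (0:ℝ) ≤ 1/2) (by norm_num)
      simp only [smul_eq_mul] at this
      have hx : (1/2 : ℝ) * x + (1/2) * (x+2) = x + 1 := by ring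
      rw [hx] at this
      linarith
    have := bexp_nonneg hl hpt
    rw [key] at this
    linarith
  nlinarith [hD]

lemma exists_big {l : List ℝ} {m a : ℝ} (ha : a ∈ l) (halt : a < m)
    (hsum : (l.length : ℝ) * m ≤ l.sum) : ∃ c ∈ l.erase a, m < c := by
  by_contra hc
  push_neg at hc
  have hperm : l.Perm (a :: l.erase a) := List.perm_cons_erase ha
  have hsum' : l.sum = a + (l.erase a).sum := by rw [hperm.sum_eq, List.sum_cons]
  have hlen : (l.erase a).length = l.length - 1 := List.length_erase_of_mem ha
  have hlpos : 1 ≤ l.length := List.length_pos_iff.mpr (List.ne_nil_of_mem ha)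
  have hb : (l.erase a).sum ≤ (l.erase a).length * m := by
    calc (l.erase a).sum ≤ (l.erase a).length • m := List.sum_le_card_nsmul _ m hc
      _ = (l.erase a).length * m := by rw [nsmul_eq_mul]
  have hcast : ((l.erase a).length : ℝ) = (l.length : ℝ) - 1 := by
    rw [hlen]; push_cast [hlpos]; ring
  rw [hcast] at hb
  nlinarith

lemma exists_small {l : List ℝ} {m a : ℝ} (ha : a ∈ l) (halt : m < a)
    (hsum : l.sum ≤ (l.length : ℝ) * m) : ∃ c ∈ l.erase a, c < m := by
  by_contra hc
  push_neg at hc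
  have hperm : l.Perm (a :: l.erase a) := List.perm_cons_erase ha
  have hsum' : l.sum = a + (l.erase a).sum := by rw [hperm.sum_eq, List.sum_cons]
  have hlen : (l.erase a).length = l.length - 1 := List.length_erase_of_mem ha
  have hlpos : 1 ≤ l.length := List.length_pos_iff.mpr (List.ne_nil_of_mem ha)
  have hb : (l.erase a).length * m ≤ (l.erase a).sum := by
    calc ((l.erase a).length : ℝ) * m = (l.erase a).length • m := by rw [nsmul_eq_mul]
      _ ≤ (l.erase a).sum := List.card_nsmul_le_sum _ m hc
  have hcast : ((l.erase a).length : ℝ) = (l.length : ℝ) - 1 := by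
    rw [hlen]; push_cast [hlpos]; ring
  rw [hcast] at hb
  nlinarith

lemma bexp_le_replicate (N : ℕ) : ∀ (l : List ℝ), l.length = N →
    (∀ x ∈ l, 0 ≤ x ∧ x ≤ 1) → ∀ (m : ℝ), 0 ≤ m → m ≤ 1 →
    l.sum = N * m → ∀ (Φ : ℝ → ℝ), ConvexOn ℝ Set.univ Φ →
    bexp l Φ ≤ bexp (List.replicate N m) Φ := by
  induction N with
  | zero =>
    intro l hlen _ m _ _ _ Φ _
    rw [List.length_eq_zero_iff.mp hlen]
    simp [bexp]
  | succ N ih =>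
    intro l hlen hmem m hm0 hm1 hsum Φ hΦ
    by_cases hall : ∀ x ∈ l, x = m
    · rw [List.eq_replicate_of_mem hall, hlen]
    · push_neg at hall
      obtain ⟨a, hal, hane⟩ := hall
      have key : ∃ x, ∃ (hx : x ∈ l), ∃ y ∈ l.erase x, m < x ∧ y < m := by
        rcases lt_or_gt_of_ne hane with h | h
        · obtain ⟨c, hcl, hc⟩ := exists_big hal h (by rw [hsum, hlen])
          have hcl' : c ∈ l := List.mem_of_mem_erase hcl
          refine ⟨c, hcl', a, ?_, hc, h⟩
          have : a ∈ l.erase c ∨ a = c := by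
            rcases eq_or_ne a c with h' | h'
            · exact Or.inr h'
            · exact Or.inl ((List.mem_erase_of_ne h').mpr hal)
          rcases this with h' | h'
          · exact h'
          · exfalso; rw [h'] at h; linarith
        · obtain ⟨c, hcl, hc⟩ := exists_small hal h (by rw [hsum, hlen])
          refine ⟨a, hal, c, hcl, h, hc⟩
      obtain ⟨x, hx, y, hy, hxm, hym⟩ := key
      set l'' := (l.erase x).erase y with hl''
      have hperm : l.Perm (x :: y :: l'') :=
        (List.perm_cons_erase hx).trans (List.Perm.cons x (List.perm_cons_erase hy))
      have hmem' : ∀ z ∈ l'', 0 ≤ z ∧ z ≤ 1 := fun z hz =>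
        hmem z (List.mem_of_mem_erase (List.mem_of_mem_erase hz))
      have hxmem := hmem x hx
      have hymem := hmem y (List.mem_of_mem_erase hy)
      have hsum2 : l.sum = x + y + l''.sum := by
        rw [hperm.sum_eq]; simp [List.sum_cons]; ring
      -- smoothing step
      have step1 : bexp l Φ = bexp (x :: y :: l'') Φ := bexp_perm hperm Φ
      have step2 : bexp (x :: y :: l'') Φ ≤ bexp (m :: (x + y - m) :: l'') Φ := by
        refine bexp_two_le hmem' (by ring) ?_ hΦ
        nlinarith [mul_nonneg (by linarith : (0:ℝ) ≤ x - m) (by linarith : (0:ℝ) ≤ m - y)]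
      have htlen : ((x + y - m) :: l'').length = N := by
        have h1 : (l.erase x).length = N := by
          rw [List.length_erase_of_mem hx, hlen]
          omega
        have h2 : l''.length = N - 1 := by
          rw [hl'', List.length_erase_of_mem hy, h1]
        have hN1 : 1 ≤ N := by
          have : 1 ≤ (l.erase x).length := List.length_pos_iff.mpr (List.ne_nil_of_mem hy)
          omega
        rw [List.length_cons, h2]; omega
      have htmem : ∀ z ∈ ((x + y - m) :: l''), 0 ≤ z ∧ z ≤ 1 := by
        intro z hz
        rcases List.mem_cons.mp hz with h | h
        · subst h
          constructor
          · linarith [hymem.1]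
          · linarith [hxmem.2]
        · exact hmem' z h
      have htsum : ((x + y - m) :: l'').sum = N * m := by
        rw [List.sum_cons]
        have : (↑(N+1) : ℝ) * m = x + y + l''.sum := by rw [← hsum, hsum2]
        push_cast at this
        linarith
      have step3 : bexp (m :: (x + y - m) :: l'') Φ ≤ bexp (List.replicate (N+1) m) Φ := by
        have hrep : List.replicate (N+1) m = m :: List.replicate N m := rfl
        rw [hrep]
        have expand : ∀ (u : List ℝ), bexp (m :: u) Φ
            = (1-m) * bexp u Φ + m * bexp u (fun x => Φ (x+1)) := fun u => rfl
        rw [expand, expand]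
        have ih1 := ih _ htlen htmem m hm0 hm1 htsum Φ hΦ
        have ih2 := ih _ htlen htmem m hm0 hm1 htsum (fun x => Φ (x+1)) (shift_convex hΦ)
        have h1m : (0:ℝ) ≤ 1 - m := by linarith
        exact add_le_add (mul_le_mul_of_nonneg_left ih1 h1m) (mul_le_mul_of_nonneg_left ih2 hm0)
      calc bexp l Φ = bexp (x :: y :: l'') Φ := step1
        _ ≤ bexp (m :: (x + y - m) :: l'') Φ := step2
        _ ≤ bexp (List.replicate (N+1) m) Φ := step3

lemma wt_replicate (q : ℝ) : ∀ (n k : ℕ),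
    wt (List.replicate n q) k = (n.choose k : ℝ) * q ^ k * (1 - q) ^ (n - k) := by
  intro n
  induction n with
  | zero => intro k; cases k <;> simp [wt]
  | succ n ih =>
    intro k
    have hrep : List.replicate (n+1) q = q :: List.replicate n q := rfl
    cases k with
    | zero =>
      rw [hrep, wt, ih 0]
      simp [pow_succ]
      ring
    | succ k =>
      rw [hrep, wt, ih (k+1), ih k]
      rcases lt_trichotomy k n with h | h | h
      · have h1 : n - k = (n - (k+1)) + 1 := by omega
        have h2 : n + 1 - (k + 1) = n - k := by omega
        rw [h2, h1, pow_succ, Nat.choose_succ_succ (n) (k)]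
        push_cast
        ring
      · subst h
        simp [Nat.choose_succ_self, Nat.choose_self, pow_succ]
        ring
      · have h1 : n.choose (k+1) = 0 := Nat.choose_eq_zero_of_lt (by omega)
        have h2 : n.choose k = 0 := Nat.choose_eq_zero_of_lt h
        have h3 : (n+1).choose (k+1) = 0 := Nat.choose_eq_zero_of_lt (by omega)
        simp [h1, h2, h3]

lemma wt_perm {l l' : List ℝ} (h : l.Perm l') : ∀ k, wt l k = wt l' k := by
  induction h with
  | nil => intro k; rfl
  | cons x _ ih =>
    intro k
    cases k with
    | zero => rw [wt, wt, ih 0]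
    | succ k => rw [wt, wt, ih (k+1), ih k]
  | swap x y l =>
    intro k
    match k with
    | 0 => simp only [wt]; ring
    | 1 => simp only [wt]; ring
    | (k+2) => simp only [wt]; ring
  | trans _ _ ih1 ih2 => intro k; rw [ih1 k, ih2 k]


lemma map_finset_sum {α β ι : Type*} [MeasurableSpace α] [MeasurableSpace β] {f : α → β}
    (hf : Measurable f) (t : Finset ι) (μ : ι → Measure α) :
    (∑ i ∈ t, μ i).map f = ∑ i ∈ t, (μ i).map f := by
  classical
  induction t using Finset.induction_on with
  | empty => simp
  | insert _ _ h ih =>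
    rw [Finset.sum_insert h, Finset.sum_insert h, Measure.map_add _ _ hf, ih]

lemma smul_prod'' {α β : Type*} [MeasurableSpace α] [MeasurableSpace β] (c : ℝ≥0∞)
    (μ : Measure α) (ν : Measure β) [SFinite μ] [SFinite ν] :
    (c • μ).prod ν = c • (μ.prod ν) := by
  ext s hs
  rw [Measure.prod_apply hs, Measure.smul_apply, Measure.prod_apply hs,
    lintegral_smul_measure, smul_eq_mul]

lemma convolve_step (q : ℝ) (hq0 : 0 ≤ q) (hq1 : q ≤ 1) (L : List ℝ)
    (hw : ∀ k, 0 ≤ wt L k) (N : ℕ) (hN : L.length = N) :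
    (ENNReal.ofReal (1 - q) •
        ∑ k ∈ range (N+1), ENNReal.ofReal (wt L k) • Measure.dirac ((0:ℝ) + (k:ℕ)))
      + ENNReal.ofReal q •
        ∑ k ∈ range (N+1), ENNReal.ofReal (wt L k) • Measure.dirac ((1:ℝ) + (k:ℕ))
    = ∑ k ∈ range (N+1+1), ENNReal.ofReal (wt (q :: L) k) • Measure.dirac (k : ℝ) := by
  have h1q : (0:ℝ) ≤ 1 - q := by linarith
  have e1 : ∀ k ∈ range (N+1),
      ENNReal.ofReal (1-q) • (ENNReal.ofReal (wt L k) • Measure.dirac ((0:ℝ)+(k:ℕ)))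
        = ENNReal.ofReal ((1-q) * wt L k) • Measure.dirac ((k:ℕ):ℝ) := by
    intro k _
    rw [smul_smul, ← ENNReal.ofReal_mul h1q]
    norm_num
  have e2 : ∀ k ∈ range (N+1),
      ENNReal.ofReal q • (ENNReal.ofReal (wt L k) • Measure.dirac ((1:ℝ)+(k:ℕ)))
        = ENNReal.ofReal (q * wt L k) • Measure.dirac (((k+1:ℕ)):ℝ) := by
    intro k _
    rw [smul_smul, ← ENNReal.ofReal_mul hq0]
    have : ((1:ℝ) + (k:ℕ)) = (((k+1:ℕ)):ℝ) := by push_cast; ring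
    rw [this]
  rw [Finset.smul_sum, Finset.smul_sum, Finset.sum_congr rfl e1, Finset.sum_congr rfl e2]
  have e3 : ∀ k ∈ range (N+1),
      ENNReal.ofReal (wt (q::L) (k+1)) • Measure.dirac (((k+1:ℕ)):ℝ)
        = ENNReal.ofReal ((1-q) * wt L (k+1)) • Measure.dirac (((k+1:ℕ)):ℝ)
          + ENNReal.ofReal (q * wt L k) • Measure.dirac (((k+1:ℕ)):ℝ) := by
    intro k _
    have hwt : wt (q::L) (k+1) = (1-q) * wt L (k+1) + q * wt L k := rfl
    rw [hwt, ENNReal.ofReal_add (mul_nonneg h1q (hw _)) (mul_nonneg hq0 (hw _)), add_smul]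
  rw [Finset.sum_range_succ'
    (fun k => ENNReal.ofReal (wt (q::L) k) • Measure.dirac ((k:ℕ):ℝ)) (N+1)]
  rw [Finset.sum_congr rfl e3, Finset.sum_add_distrib]
  have e4 : (ENNReal.ofReal (wt (q::L) 0) • Measure.dirac (((0:ℕ)):ℝ))
      = ENNReal.ofReal ((1-q) * wt L 0) • Measure.dirac (((0:ℕ)):ℝ) := rfl
  rw [e4]
  have eA : ∑ k ∈ range (N+1), ENNReal.ofReal ((1-q) * wt L k) • Measure.dirac ((k:ℕ):ℝ)
      = ∑ k ∈ range (N+1), ENNReal.ofReal ((1-q) * wt L (k+1)) • Measure.dirac (((k+1:ℕ)):ℝ)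
        + ENNReal.ofReal ((1-q) * wt L 0) • Measure.dirac (((0:ℕ)):ℝ) := by
    have h5 := Finset.sum_range_succ'
      (fun k => ENNReal.ofReal ((1-q) * wt L k) • Measure.dirac ((k:ℕ):ℝ)) (N+1)
    have h6 : ∑ k ∈ range (N+1+1), ENNReal.ofReal ((1-q) * wt L k) • Measure.dirac ((k:ℕ):ℝ)
        = ∑ k ∈ range (N+1), ENNReal.ofReal ((1-q) * wt L k) • Measure.dirac ((k:ℕ):ℝ) := by
      rw [Finset.sum_range_succ, wt_eq_zero (by omega)]
      norm_num
    rw [h6] at h5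
    exact h5
  rw [eA]
  abel

end HoeffdingAux

/-- The binomial distribution `B(n,p)` as a measure on `ℝ`. -/
noncomputable def binMeasure (n : ℕ) (p : ℝ) : Measure ℝ :=
  ∑ k ∈ range (n + 1),
    ENNReal.ofReal ((n.choose k : ℝ) * p ^ k * (1 - p) ^ (n - k)) • Measure.dirac (k : ℝ)

open HoeffdingAux in
/-- Hoeffding's convex concentration inequality: a sum of independent Bernoulli
variables with parameters `p i` is dominated in the convex order by `B(n, p̄)`. -/
theorem hoeffding_convex_concentration {Ω : Type*} [MeasurableSpace Ω]
    (μ : Measure Ω) [IsProbabilityMeasure μ] (n : ℕ) (hn : 1 ≤ n)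
    (p : Fin n → ℝ) (hp : ∀ i, p i ∈ Set.Ioo (0:ℝ) 1)
    (b : Fin n → Ω → ℝ) (hmeas : ∀ i, Measurable (b i))
    (hindep : iIndepFun b μ)
    (hdist : ∀ i, μ.map (b i) = binMeasure 1 (p i))
    (Φ : ℝ → ℝ) (hΦ : ConvexOn ℝ Set.univ Φ) :
    ∫ ω, Φ (∑ i, b i ω) ∂μ
      ≤ ∑ k ∈ range (n + 1),
          ((n.choose k : ℝ) * ((∑ i, p i) / n) ^ k * (1 - (∑ i, p i) / n) ^ (n - k)) * Φ k := by
  classical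
  have hΦc : Continuous Φ := by
    rw [← continuousOn_univ]
    exact hΦ.continuousOn isOpen_univ
  -- the law of each partial sum
  have law : ∀ s : Finset (Fin n),
      μ.map (fun ω => ∑ i ∈ s, b i ω)
        = ∑ k ∈ range (s.card + 1),
            ENNReal.ofReal (wt (s.toList.map p) k) • Measure.dirac (k : ℝ) := by
    intro s
    induction s using Finset.induction_on with
    | empty =>
      simp only [Finset.sum_empty, Finset.card_empty, Finset.toList_empty, List.map_nil]
      rw [Measure.map_const]
      simp [wt]
    | @insert a s ha ih =>
      have hY : Measurable fun ω => ∑ i ∈ s, b i ω :=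
        Finset.measurable_sum s (fun i _ => hmeas i)
      haveI : IsProbabilityMeasure (μ.map fun ω => ∑ i ∈ s, b i ω) :=
        Measure.isProbabilityMeasure_map hY.aemeasurable
      have hXY : IndepFun (b a) (fun ω => ∑ i ∈ s, b i ω) μ := by
        have h := (hindep.indepFun_finsetSum_of_notMem hmeas ha).symm
        have he : (∑ i ∈ s, b i) = fun ω => ∑ i ∈ s, b i ω := by
          ext ω; simp
        rwa [he] at h
      have hpair := (indepFun_iff_map_prod_eq_prod_map_map (hmeas a).aemeasurable
        hY.aemeasurable).mp hXY
      have hadd : Measurable fun z : ℝ × ℝ => z.1 + z.2 :=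
        measurable_fst.add measurable_snd
      have hmm : μ.map (fun ω => ∑ i ∈ insert a s, b i ω)
          = ((μ.map (b a)).prod (μ.map fun ω => ∑ i ∈ s, b i ω)).map
              (fun z : ℝ × ℝ => z.1 + z.2) := by
        rw [← hpair, Measure.map_map hadd ((hmeas a).prodMk hY)]
        congr 1
        ext ω
        simp [Finset.sum_insert ha]
      rw [hmm, hdist a]
      have hbin : binMeasure 1 (p a)
          = ENNReal.ofReal (1 - p a) • Measure.dirac (0:ℝ)
            + ENNReal.ofReal (p a) • Measure.dirac (1:ℝ) := by
        rw [binMeasure, Finset.sum_range_succ, Finset.sum_range_one]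
        norm_num
      rw [hbin, Measure.add_prod, smul_prod'', smul_prod'', Measure.dirac_prod,
        Measure.dirac_prod, Measure.map_add _ _ hadd, Measure.map_smul, Measure.map_smul,
        Measure.map_map hadd measurable_prodMk_left,
        Measure.map_map hadd measurable_prodMk_left]
      have hcomp : ∀ x : ℝ,
          ((fun z : ℝ × ℝ => z.1 + z.2) ∘ (Prod.mk x)) = fun y : ℝ => x + y := fun x => rfl
      rw [hcomp 0, hcomp 1, ih,
        map_finset_sum (measurable_const_add (0:ℝ)) _ _,
        map_finset_sum (measurable_const_add (1:ℝ)) _ _]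
      have hmap0 : ∀ k ∈ range (s.card + 1),
          (ENNReal.ofReal (wt (s.toList.map p) k) • Measure.dirac ((k:ℕ):ℝ)).map
              (fun y : ℝ => (0:ℝ) + y)
            = ENNReal.ofReal (wt (s.toList.map p) k) • Measure.dirac ((0:ℝ) + (k:ℕ)) := by
        intro k _
        rw [Measure.map_smul, Measure.map_dirac' (measurable_const_add (0:ℝ))]
      have hmap1 : ∀ k ∈ range (s.card + 1),
          (ENNReal.ofReal (wt (s.toList.map p) k) • Measure.dirac ((k:ℕ):ℝ)).map
              (fun y : ℝ => (1:ℝ) + y)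
            = ENNReal.ofReal (wt (s.toList.map p) k) • Measure.dirac ((1:ℝ) + (k:ℕ)) := by
        intro k _
        rw [Measure.map_smul, Measure.map_dirac' (measurable_const_add (1:ℝ))]
      rw [Finset.sum_congr rfl hmap0, Finset.sum_congr rfl hmap1]
      have hmemL : ∀ x ∈ s.toList.map p, 0 ≤ x ∧ x ≤ 1 := by
        intro x hx
        rcases List.mem_map.mp hx with ⟨i, _, rfl⟩
        exact ⟨(hp i).1.le, (hp i).2.le⟩
      have hstep := convolve_step (p a) (hp a).1.le (hp a).2.le (s.toList.map p)
        (wt_nonneg hmemL) s.card (by simp [Finset.length_toList])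
      rw [hstep]
      have hcard : (insert a s).card + 1 = s.card + 1 + 1 := by
        rw [Finset.card_insert_of_notMem ha]
      rw [hcard]
      refine Finset.sum_congr rfl fun k _ => ?_
      congr 2
      refine wt_perm ?_ k
      exact ((Finset.toList_insert ha).map p).symm
  -- compute the integral
  have hS : Measurable fun ω => ∑ i, b i ω :=
    Finset.measurable_sum _ (fun i _ => hmeas i)
  have hint : ∫ ω, Φ (∑ i, b i ω) ∂μ
      = ∫ y, Φ y ∂(μ.map (fun ω => ∑ i, b i ω)) :=
    (integral_map hS.aemeasurable hΦc.aestronglyMeasurable).symm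
  have hcardu : (univ : Finset (Fin n)).card = n := by simp
  have hLlen : ((univ : Finset (Fin n)).toList.map p).length = n := by
    simp [Finset.length_toList]
  have hLmem : ∀ x ∈ (univ : Finset (Fin n)).toList.map p, 0 ≤ x ∧ x ≤ 1 := by
    intro x hx
    rcases List.mem_map.mp hx with ⟨i, _, rfl⟩
    exact ⟨(hp i).1.le, (hp i).2.le⟩
  have hwnn := wt_nonneg hLmem
  rw [hint, law univ, hcardu]
  have hIntegr : ∀ k ∈ range (n+1),
      Integrable Φ (ENNReal.ofReal (wt ((univ : Finset (Fin n)).toList.map p) k)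
        • Measure.dirac ((k:ℕ):ℝ)) := by
    intro k _
    refine Integrable.smul_measure ?_ ENNReal.ofReal_ne_top
    exact (integrable_const (Φ ((k:ℕ):ℝ))).congr (ae_eq_dirac Φ).symm
  rw [integral_finset_sum_measure hIntegr]
  have hterm : ∀ k ∈ range (n+1),
      ∫ x, Φ x ∂(ENNReal.ofReal (wt ((univ : Finset (Fin n)).toList.map p) k)
          • Measure.dirac ((k:ℕ):ℝ))
        = wt ((univ : Finset (Fin n)).toList.map p) k * Φ ((k:ℕ):ℝ) := by
    intro k _
    rw [integral_smul_measure, integral_dirac, ENNReal.toReal_ofReal (hwnn k)]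
    simp [smul_eq_mul]
  rw [Finset.sum_congr rfl hterm]
  -- the combinatorial inequality
  set m : ℝ := (∑ i, p i) / n with hm
  have hnpos : (0:ℝ) < n := by positivity
  have hsumpos : ∀ i : Fin n, 0 ≤ p i := fun i => (hp i).1.le
  have hm0 : 0 ≤ m := by
    apply div_nonneg _ hnpos.le
    exact Finset.sum_nonneg fun i _ => (hp i).1.le
  have hm1 : m ≤ 1 := by
    rw [hm, div_le_one hnpos]
    calc ∑ i, p i ≤ ∑ _i : Fin n, (1:ℝ) := Finset.sum_le_sum fun i _ => (hp i).2.le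
      _ = n := by simp
  have hLsum : ((univ : Finset (Fin n)).toList.map p).sum = (n:ℝ) * m := by
    rw [Finset.sum_map_toList, hm]
    field_simp
  calc ∑ k ∈ range (n+1), wt ((univ : Finset (Fin n)).toList.map p) k * Φ ((k:ℕ):ℝ)
      = bexp ((univ : Finset (Fin n)).toList.map p) Φ := by
        rw [bexp_eq_sum, hLlen]
    _ ≤ bexp (List.replicate n m) Φ :=
        bexp_le_replicate n _ hLlen hLmem m hm0 hm1 hLsum Φ hΦ
    _ = ∑ k ∈ range (n+1), wt (List.replicate n m) k * Φ ((k:ℕ):ℝ) := by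
        rw [bexp_eq_sum, List.length_replicate]
    _ = ∑ k ∈ range (n + 1),
          ((n.choose k : ℝ) * m ^ k * (1 - m) ^ (n - k)) * Φ ((k:ℕ):ℝ) := by
        refine Finset.sum_congr rfl fun k _ => ?_
        rw [wt_replicate]
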